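/- Let R be a finite centralizing extension of a k-subalgebra U over a field k, and let ξ be a character of U. Then there are only finitely many characters of R whose restriction to U equals ξ. -/
import Mathlib


/-- let `R` be a finite centralizing extension of a `k`-subalgebra `A` and
`ξ` a character of `A`.  Then only finitely many characters of `R` restrict to `ξ` on `A`. -/
theorem finite_centralizing_finitely_many_characters {k R : Type*}
    [Field k] [Ring R] [Algebra k R] (A : Subalgebra k R)
    (s : ℕ) (r : Fin (s + 1) → R)
    (hcent : ∀ i, ∀ u : A, (u : R) * r i = r i * (u : R))
    (hgen : ∀ x : R, ∃ a : Fin (s + 1) → A, x = ∑ i, (a i : R) * r i)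
    (ξ : A →ₐ[k] k) :
    {χ : R →ₐ[k] k | ∀ u : A, χ u = ξ u}.Finite := by
  classical
  set S := {χ : R →ₐ[k] k | ∀ u : A, χ u = ξ u}
  -- fixed choice of coordinates
  choose a ha using hgen
  -- the s+1 functions spanning all characters in S
  let f : Fin (s + 1) → (R → k) := fun i x => ξ (a x i)
  -- the family of coercions of characters in S
  let v : S → (R → k) := fun χ => ⇑χ.1
  have hv : LinearIndependent k v := by
    have h := linearIndependent_monoidHom R k
    have : v = (fun g : R →* k => (g : R → k)) ∘
        (fun χ : S => ((χ.1 : R →* k) : R →* k)) := rfl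
    rw [this]
    refine h.comp _ fun χ₁ χ₂ hEq => Subtype.ext (AlgHom.ext fun x => ?_)
    exact DFunLike.congr_fun hEq x
  have hrange : Set.range v ≤ Submodule.span k (Set.range f) := by
    rintro _ ⟨⟨χ, hχ⟩, rfl⟩
    have : ⇑χ = ∑ i, χ (r i) • f i := by
      funext x
      have hx := ha x
      calc χ x = χ (∑ i, (a x i : R) * r i) := by rw [← hx]
        _ = ∑ i, χ (a x i) * χ (r i) := by simp [map_sum, map_mul]
        _ = ∑ i, χ (r i) * ξ (a x i) := by
            refine Finset.sum_congr rfl fun i _ => ?_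
            rw [hχ (a x i), mul_comm]
        _ = (∑ i, χ (r i) • f i) x := by simp [f, Finset.sum_apply]
    rw [show v ⟨χ, hχ⟩ = ⇑χ from rfl, this]
    exact Submodule.sum_mem _ fun i _ =>
      Submodule.smul_mem _ _ (Submodule.subset_span ⟨i, rfl⟩)
  haveI := (Set.finite_range f).to_subtype
  have : Finite S := LinearIndependent.finite_of_le_span_finite v hv (Set.range f) hrange
  exact S.toFinite
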